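/- Let τ have relations R₁,…,R_m with arities r₁,…,r_m, let B be a finite τ-structure, and let B̲₀ be the random structure on B × [n] where each lift of each tuple (i.e., each tuple projecting coordinatewise to a relational tuple of B) is included independently with probability p_k = n^{1−k+1/g} for arity k. Then the expected number of relational tuples of B̲₀ lying on cycles of length at most g is O(|B|^{g(r−1)}·n), where r = max arity and the implied constant depends only on τ and g. -/

import Mathlib

open MeasureTheory ENNReal

/-- The tuple indexed by `c` is a relational tuple of the random lifted structure
determined by the sample `ω`. -/
def InRandomRel {ι β : Type} {arity : ι → ℕ} {n : ℕ}
    (RB : ∀ i, Set (Fin (arity i) → β))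
    (ω : (Σ i : ι, Fin (arity i) → β × Fin n) → Bool)
    (c : Σ i : ι, Fin (arity i) → β × Fin n) : Prop :=
  ω c = true ∧ (fun j => (c.2 j).1) ∈ RB c.1

/-- The relational tuple `c` lies on a cycle of length at most `g` of the random
lifted structure determined by `ω` (degenerate cycles of length 1 included). -/
def OnShortCycle {ι β : Type} {arity : ι → ℕ} {n : ℕ}
    (RB : ∀ i, Set (Fin (arity i) → β)) (g : ℕ)
    (ω : (Σ i : ι, Fin (arity i) → β × Fin n) → Bool)
    (c : Σ i : ι, Fin (arity i) → β × Fin n) : Prop :=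
  (1 ≤ g ∧ ¬ Function.Injective c.2) ∨
  (∃ s : ℕ, s + 2 ≤ g ∧
    ∃ (x : Fin (s + 2) → β × Fin n) (rr : Fin (s + 2) → Σ i : ι, Fin (arity i) → β × Fin n),
      Function.Injective x ∧ Function.Injective rr ∧
      (∀ m, InRandomRel RB ω (rr m)) ∧
      (∀ m : Fin (s + 2), (∃ j, (rr m).2 j = x m) ∧ (∃ j, (rr (m + 1)).2 j = x m)) ∧
      ∃ m, rr m = c)

section Aux

open Finset

/-! ### Counting lemmas -/

lemma aux_card_det {k : ℕ} {γ : Type} [Fintype γ] (S : Finset (Fin k))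
    (P : (Fin k → γ) → Prop) [DecidablePred P]
    (h : ∀ f g, P f → P g → (∀ i, i ∉ S → f i = g i) → f = g) :
    (Finset.univ.filter P).card ≤ Fintype.card γ ^ (k - S.card) := by
  classical
  have hinj : Set.InjOn (fun f : Fin k → γ => (fun i : {i : Fin k // i ∉ S} => f i.1))
      (Finset.univ.filter P) := by
    intro f hf g hg hfg
    simp only [coe_filter, Set.mem_setOf_eq] at hf hg
    exact h f g hf.2 hg.2 (fun i hi => congrFun hfg ⟨i, hi⟩)
  calc (Finset.univ.filter P).card
      ≤ (Finset.univ : Finset ({i : Fin k // i ∉ S} → γ)).card :=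
        Finset.card_le_card_of_injOn _ (fun _ _ => mem_univ _) hinj
    _ = Fintype.card γ ^ (k - S.card) := by
        rw [Finset.card_univ, Fintype.card_fun]
        congr 1
        rw [Fintype.card_subtype]
        have : Finset.univ.filter (fun i : Fin k => i ∉ S) = Finset.univ \ S := by
          ext i; simp
        rw [this, Finset.card_sdiff_of_subset (subset_univ S), Finset.card_univ, Fintype.card_fin]

lemma aux_card_pinned {k : ℕ} {γ : Type} [Fintype γ] {a b : γ} (hab : a ≠ b)
    (P : (Fin k → γ) → Prop) [DecidablePred P]
    (hP : ∀ f, P f → (∃ j, f j = a) ∧ (∃ j, f j = b)) :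
    (Finset.univ.filter P).card ≤ k ^ 2 * Fintype.card γ ^ (k - 2) := by
  classical
  have hsub : (Finset.univ.filter P)
      ⊆ ((Finset.univ : Finset (Fin k)).offDiag).biUnion
        (fun p => Finset.univ.filter (fun f : Fin k → γ => f p.1 = a ∧ f p.2 = b)) := by
    intro f hf
    simp only [mem_filter, mem_univ, true_and] at hf
    obtain ⟨⟨j, hj⟩, ⟨j', hj'⟩⟩ := hP f hf
    have hjj : j ≠ j' := by rintro rfl; exact hab (hj ▸ hj'.symm ▸ rfl)
    refine Finset.mem_biUnion.2 ⟨(j, j'), ?_, ?_⟩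
    · simp [Finset.mem_offDiag, hjj]
    · simp [hj, hj']
  calc _ ≤ _ := Finset.card_le_card hsub
    _ ≤ ∑ p ∈ (Finset.univ : Finset (Fin k)).offDiag,
        (Finset.univ.filter (fun f : Fin k → γ => f p.1 = a ∧ f p.2 = b)).card :=
        Finset.card_biUnion_le
    _ ≤ ∑ p ∈ (Finset.univ : Finset (Fin k)).offDiag, Fintype.card γ ^ (k - 2) := by
        refine Finset.sum_le_sum (fun p hp => ?_)
        have hne : p.1 ≠ p.2 := (Finset.mem_offDiag.1 hp).2.2
        have := aux_card_det (γ := γ) {p.1, p.2}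
          (fun f => f p.1 = a ∧ f p.2 = b)
          (by
            intro f g hf hg hout
            funext i
            by_cases h1 : i = p.1
            · rw [h1, hf.1, hg.1]
            · by_cases h2 : i = p.2
              · rw [h2, hf.2, hg.2]
              · exact hout i (by simp [h1, h2]))
        rwa [Finset.card_pair hne] at this
    _ ≤ k ^ 2 * Fintype.card γ ^ (k - 2) := by
        rw [Finset.sum_const, smul_eq_mul]
        gcongr
        calc (Finset.univ : Finset (Fin k)).offDiag.card
            ≤ (Finset.univ : Finset (Fin k × Fin k)).card :=
              Finset.card_le_card (Finset.subset_univ _)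
          _ = k ^ 2 := by simp [sq]

lemma aux_card_noninj {k : ℕ} {γ : Type} [Fintype γ]
    (P : (Fin k → γ) → Prop) [DecidablePred P]
    (hP : ∀ f, P f → ¬ Function.Injective f) :
    (Finset.univ.filter P).card ≤ k ^ 2 * Fintype.card γ ^ (k - 1) := by
  classical
  have hsub : (Finset.univ.filter P)
      ⊆ ((Finset.univ : Finset (Fin k)).offDiag).biUnion
        (fun p => Finset.univ.filter (fun f : Fin k → γ => f p.1 = f p.2)) := by
    intro f hf
    simp only [mem_filter, mem_univ, true_and] at hf
    have hf' := hP f hf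
    rw [Function.not_injective_iff] at hf'
    obtain ⟨j, j', hjj, hne⟩ := hf'
    refine Finset.mem_biUnion.2 ⟨(j, j'), ?_, ?_⟩
    · simp [Finset.mem_offDiag, hne]
    · simp [hjj]
  calc _ ≤ _ := Finset.card_le_card hsub
    _ ≤ ∑ p ∈ (Finset.univ : Finset (Fin k)).offDiag,
        (Finset.univ.filter (fun f : Fin k → γ => f p.1 = f p.2)).card :=
        Finset.card_biUnion_le
    _ ≤ ∑ p ∈ (Finset.univ : Finset (Fin k)).offDiag, Fintype.card γ ^ (k - 1) := by
        refine Finset.sum_le_sum (fun p hp => ?_)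
        have hne : p.1 ≠ p.2 := (Finset.mem_offDiag.1 hp).2.2
        have := aux_card_det (γ := γ) {p.2}
          (fun f => f p.1 = f p.2)
          (by
            intro f g hf hg hout
            have h1 : f p.1 = g p.1 := hout p.1 (by simp [hne])
            funext i
            by_cases h2 : i = p.2
            · rw [h2, ← hf, ← hg, h1]
            · exact hout i (by simp [h2]))
        rwa [Finset.card_singleton] at this
    _ ≤ k ^ 2 * Fintype.card γ ^ (k - 1) := by
        rw [Finset.sum_const, smul_eq_mul]
        gcongr
        calc (Finset.univ : Finset (Fin k)).offDiag.card
            ≤ (Finset.univ : Finset (Fin k × Fin k)).card :=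
              Finset.card_le_card (Finset.subset_univ _)
          _ = k ^ 2 := by simp [sq]

lemma aux_pinned_empty {k : ℕ} {γ : Type} [Fintype γ] {a b : γ} (hab : a ≠ b) (hk : k ≤ 1)
    (P : (Fin k → γ) → Prop) [DecidablePred P]
    (hP : ∀ f, P f → (∃ j, f j = a) ∧ (∃ j, f j = b)) :
    (Finset.univ.filter P) = ∅ := by
  rw [Finset.eq_empty_iff_forall_notMem]
  intro f hf
  simp only [Finset.mem_filter] at hf
  obtain ⟨⟨j, hj⟩, ⟨j', hj'⟩⟩ := hP f hf.2
  have hjj : j = j' := by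
    have := j.isLt; have := j'.isLt
    exact Fin.ext (by omega)
  exact hab (by rw [← hj, hjj, hj'])

/-! ### Measure-theoretic lemmas -/

lemma aux_meas_all {K : Type} [Finite K] (S : Set (K → Bool)) : MeasurableSet S :=
  (Set.to_countable S).measurableSet

lemma aux_meas_fun {K : Type} [Finite K] {α : Type} [MeasurableSpace α]
    (f : (K → Bool) → α) : Measurable f := fun _ _ => aux_meas_all _

lemma aux_cyl {K : Type} [Fintype K] (ν : K → Measure Bool) [∀ c, IsProbabilityMeasure (ν c)]
    {m : ℕ} (rr : Fin m → K) (hinj : Function.Injective rr) :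
    Measure.pi ν {ω : K → Bool | ∀ j, ω (rr j) = true} = ∏ j, ν (rr j) {true} := by
  classical
  have hset : {ω : K → Bool | ∀ j, ω (rr j) = true}
      = Set.univ.pi (fun t => {b : Bool | ∀ j, rr j = t → b = true}) := by
    ext ω
    simp only [Set.mem_setOf_eq, Set.mem_pi, Set.mem_univ, forall_true_left]
    constructor
    · intro h t j hj; rw [← hj]; exact h j
    · intro h j; exact h (rr j) j rfl
  rw [hset, Measure.pi_pi]
  have hout : ∀ t ∈ (Finset.univ : Finset K), t ∉ Finset.image rr Finset.univ →
      ν t {b : Bool | ∀ j, rr j = t → b = true} = 1 := by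
    intro t _ ht
    have : {b : Bool | ∀ j, rr j = t → b = true} = Set.univ := by
      ext b
      simp only [Set.mem_setOf_eq, Set.mem_univ, iff_true]
      intro j hj
      exact absurd (Finset.mem_image.2 ⟨j, Finset.mem_univ j, hj⟩) ht
    rw [this]; exact measure_univ
  rw [← Finset.prod_subset (Finset.subset_univ (Finset.image rr Finset.univ)) hout,
    Finset.prod_image (fun a _ b _ h => hinj h)]
  refine Finset.prod_congr rfl (fun j _ => ?_)
  congr 1
  ext b
  simp only [Set.mem_setOf_eq, Set.mem_singleton_iff]
  constructor
  · intro h; exact h j rfl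
  · rintro rfl j' hj'; rfl

lemma aux_expand {K : Type} [Fintype K] (ν : K → Measure Bool)
    [∀ c, IsProbabilityMeasure (ν c)] (P : K → (K → Bool) → Prop) :
    ∫⁻ ω, (Nat.card {c : K // P c ω} : ℝ≥0∞) ∂(Measure.pi ν)
      = ∑ c : K, Measure.pi ν {ω | P c ω} := by
  classical
  have h1 : ∀ ω, (Nat.card {c : K // P c ω} : ℝ≥0∞)
      = ∑ c : K, Set.indicator {ω' | P c ω'} (fun _ => (1 : ℝ≥0∞)) ω := by
    intro ω
    rw [Nat.card_eq_fintype_card, Fintype.card_subtype, Finset.card_filter]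
    push_cast
    refine Finset.sum_congr rfl (fun c _ => ?_)
    by_cases h : P c ω <;> simp [Set.indicator_apply, h]
  simp only [h1]
  rw [lintegral_finset_sum _ (fun c _ => aux_meas_fun _)]
  refine Finset.sum_congr rfl fun c _ => ?_
  rw [lintegral_indicator (aux_meas_all _), setLIntegral_one]

/-! ### Arithmetic lemmas -/

lemma aux_npow_mul_ofReal {n : ℕ} (hn : 1 ≤ n) (m : ℕ) (x : ℝ) :
    ((n : ℝ≥0∞))^m * ENNReal.ofReal ((n:ℝ) ^ x) = ENNReal.ofReal ((n:ℝ) ^ ((m:ℝ) + x)) := by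
  have hp : (0:ℝ) < n := by exact_mod_cast Nat.lt_of_lt_of_le Nat.zero_lt_one hn
  have h1 : ((n : ℝ≥0∞))^m = ENNReal.ofReal ((n:ℝ) ^ (m:ℝ)) := by
    rw [Real.rpow_natCast, ENNReal.ofReal_pow hp.le, ENNReal.ofReal_natCast]
  rw [h1, ← ENNReal.ofReal_mul (by positivity), ← Real.rpow_add hp]

lemma aux_ofReal_rpow_le {n : ℕ} (hn : 1 ≤ n) {x y : ℝ} (hxy : x ≤ y) :
    ENNReal.ofReal ((n:ℝ) ^ x) ≤ ENNReal.ofReal ((n:ℝ) ^ y) :=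
  ENNReal.ofReal_le_ofReal (Real.rpow_le_rpow_of_exponent_le (by exact_mod_cast hn) hxy)

lemma aux_ofReal_rpow_one {n : ℕ} : ENNReal.ofReal ((n:ℝ) ^ (1:ℝ)) = (n : ℝ≥0∞) := by
  rw [Real.rpow_one, ENNReal.ofReal_natCast]

lemma aux_ofReal_rpow_pow {n : ℕ} (x : ℝ) (m : ℕ) :
    (ENNReal.ofReal ((n:ℝ) ^ x))^m = ENNReal.ofReal ((n:ℝ) ^ (x * m)) := by
  rw [← ENNReal.ofReal_pow (Real.rpow_nonneg (Nat.cast_nonneg n) x)]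
  congr 1
  rw [← Real.rpow_natCast ((n:ℝ)^x) m, ← Real.rpow_mul (Nat.cast_nonneg n)]

end Aux
section Aux2
open Finset

lemma aux_tuple_sum {ι : Type} [Fintype ι] (arity : ι → ℕ)
    {β : Type} [Fintype β] {n g : ℕ} (hn : 1 ≤ n)
    (hB : 1 ≤ Fintype.card β) {a b : β × Fin n} (hab : a ≠ b)
    (P : (Σ i : ι, Fin (arity i) → β × Fin n) → Prop) [DecidablePred P]
    (hP : ∀ t, P t ↔ (∃ j, t.2 j = a) ∧ (∃ j, t.2 j = b)) :
    ∑ t ∈ Finset.univ.filter P,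
      ENNReal.ofReal ((n:ℝ) ^ ((1:ℝ) - (arity t.1 : ℝ) + 1 / (g:ℝ)))
    ≤ (if 2 ≤ Finset.univ.sup arity then
        ((∑ i, (arity i)^2 : ℕ) : ℝ≥0∞) * (Fintype.card β : ℝ≥0∞)^(Finset.univ.sup arity - 2)
          * ENNReal.ofReal ((n:ℝ) ^ (1/(g:ℝ) - 1)) else 0) := by
  classical
  have hsig : (Finset.univ.filter P)
      = Finset.univ.sigma (fun i => Finset.univ.filter
          (fun fn : Fin (arity i) → β × Fin n => P ⟨i, fn⟩)) := by
    ext ⟨i, fn⟩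
    simp [Finset.mem_sigma]
  rw [hsig, Finset.sum_sigma]
  by_cases hr2 : 2 ≤ Finset.univ.sup arity
  · rw [if_pos hr2]
    have key : ∀ i : ι,
        ∑ _fn ∈ Finset.univ.filter (fun fn : Fin (arity i) → β × Fin n => P ⟨i, fn⟩),
          ENNReal.ofReal ((n:ℝ) ^ ((1:ℝ) - (arity i : ℝ) + 1 / (g:ℝ)))
        ≤ (((arity i)^2 : ℕ) : ℝ≥0∞) * (Fintype.card β : ℝ≥0∞)^(Finset.univ.sup arity - 2)
            * ENNReal.ofReal ((n:ℝ) ^ (1/(g:ℝ) - 1)) := by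
      intro i
      rw [Finset.sum_const, nsmul_eq_mul]
      by_cases hk : arity i ≤ 1
      · rw [aux_pinned_empty hab hk _ (fun fn h => (hP ⟨i, fn⟩).1 h)]
        simp
      · push_neg at hk
        have hk2 : 2 ≤ arity i := hk
        have hle : arity i ≤ Finset.univ.sup arity := Finset.le_sup (Finset.mem_univ i)
        have hcard := aux_card_pinned hab (fun fn : Fin (arity i) → β × Fin n => P ⟨i, fn⟩)
          (fun fn h => (hP ⟨i, fn⟩).1 h)
        calc ((Finset.univ.filter (fun fn : Fin (arity i) → β × Fin n => P ⟨i, fn⟩)).card : ℝ≥0∞)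
              * ENNReal.ofReal ((n:ℝ) ^ ((1:ℝ) - (arity i : ℝ) + 1 / (g:ℝ)))
            ≤ (((arity i) ^ 2 * Fintype.card (β × Fin n) ^ (arity i - 2) : ℕ) : ℝ≥0∞)
              * ENNReal.ofReal ((n:ℝ) ^ ((1:ℝ) - (arity i : ℝ) + 1 / (g:ℝ))) :=
              mul_le_mul_left (by exact_mod_cast hcard) _
          _ = (((arity i)^2 : ℕ) : ℝ≥0∞) * ((Fintype.card β : ℝ≥0∞)^(arity i - 2)
              * (((n:ℝ≥0∞))^(arity i - 2)
                * ENNReal.ofReal ((n:ℝ) ^ ((1:ℝ) - (arity i : ℝ) + 1 / (g:ℝ))))) := by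
              rw [Fintype.card_prod, Fintype.card_fin]
              push_cast
              ring
          _ = (((arity i)^2 : ℕ) : ℝ≥0∞) * ((Fintype.card β : ℝ≥0∞)^(arity i - 2)
              * ENNReal.ofReal ((n:ℝ) ^ (1/(g:ℝ) - 1))) := by
              rw [aux_npow_mul_ofReal hn]
              have h2 : ((arity i - 2 : ℕ) : ℝ) + ((1:ℝ) - (arity i : ℝ) + 1 / (g:ℝ))
                  = 1/(g:ℝ) - 1 := by
                rw [Nat.cast_sub hk2]; push_cast; ring
              rw [h2]
          _ ≤ (((arity i)^2 : ℕ) : ℝ≥0∞) * ((Fintype.card β : ℝ≥0∞)^(Finset.univ.sup arity - 2)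
              * ENNReal.ofReal ((n:ℝ) ^ (1/(g:ℝ) - 1))) :=
              mul_le_mul_right (mul_le_mul_left
                (pow_le_pow_right₀ (by exact_mod_cast hB) (by omega)) _) _
          _ = (((arity i)^2 : ℕ) : ℝ≥0∞) * (Fintype.card β : ℝ≥0∞)^(Finset.univ.sup arity - 2)
              * ENNReal.ofReal ((n:ℝ) ^ (1/(g:ℝ) - 1)) := (mul_assoc _ _ _).symm
    calc ∑ i : ι, ∑ _fn ∈ Finset.univ.filter (fun fn : Fin (arity i) → β × Fin n => P ⟨i, fn⟩),
          ENNReal.ofReal ((n:ℝ) ^ ((1:ℝ) - (arity i : ℝ) + 1 / (g:ℝ)))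
        ≤ ∑ i : ι, (((arity i)^2 : ℕ) : ℝ≥0∞)
            * (Fintype.card β : ℝ≥0∞)^(Finset.univ.sup arity - 2)
            * ENNReal.ofReal ((n:ℝ) ^ (1/(g:ℝ) - 1)) := Finset.sum_le_sum (fun i _ => key i)
      _ = ((∑ i, (arity i)^2 : ℕ) : ℝ≥0∞) * (Fintype.card β : ℝ≥0∞)^(Finset.univ.sup arity - 2)
            * ENNReal.ofReal ((n:ℝ) ^ (1/(g:ℝ) - 1)) := by
          rw [← Finset.sum_mul, ← Finset.sum_mul]
          push_cast
          rfl
  · rw [if_neg hr2]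
    have hempty : ∀ i : ι, (Finset.univ.filter
        (fun fn : Fin (arity i) → β × Fin n => P ⟨i, fn⟩)) = ∅ := by
      intro i
      refine aux_pinned_empty hab ?_ _ (fun fn h => (hP ⟨i, fn⟩).1 h)
      have := Finset.le_sup (f := arity) (Finset.mem_univ i)
      omega
    simp [hempty]

lemma aux_deg {ι : Type} [Fintype ι] (arity : ι → ℕ) (h1 : ∀ i, 1 ≤ arity i)
    {β : Type} [Fintype β] {n g : ℕ} (hn : 1 ≤ n) (hg : 1 ≤ g)
    (hB : 1 ≤ Fintype.card β)
    (w : (Σ i : ι, Fin (arity i) → β × Fin n) → ℝ≥0∞)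
    (hw0 : ∀ c, Function.Injective c.2 → w c = 0)
    (hw1 : ∀ c, w c ≤ ENNReal.ofReal ((n:ℝ) ^ ((1:ℝ) - (arity c.1 : ℝ) + 1/(g:ℝ)))) :
    ∑ c, w c ≤ ((∑ i, (arity i)^2 : ℕ) : ℝ≥0∞)
      * (Fintype.card β : ℝ≥0∞)^(g * (Finset.univ.sup arity - 1)) * n := by
  classical
  rw [← Finset.univ_sigma_univ, Finset.sum_sigma]
  have hgr : (1:ℝ)/(g:ℝ) ≤ 1 := by
    rw [div_le_one (by exact_mod_cast Nat.lt_of_lt_of_le Nat.zero_lt_one hg)]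
    exact_mod_cast hg
  have key : ∀ i, ∑ fn : Fin (arity i) → β × Fin n, w ⟨i, fn⟩
      ≤ (((arity i)^2 : ℕ) : ℝ≥0∞)
        * (Fintype.card β : ℝ≥0∞)^(g * (Finset.univ.sup arity - 1)) * (n : ℝ≥0∞) := by
    intro i
    have hsplit : ∑ fn : Fin (arity i) → β × Fin n, w ⟨i, fn⟩
        = ∑ fn ∈ Finset.univ.filter (fun fn : Fin (arity i) → β × Fin n =>
            ¬ Function.Injective fn), w ⟨i, fn⟩ := by
      symm
      apply Finset.sum_subset (Finset.filter_subset _ _)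
      intro fn _ hfn
      simp only [Finset.mem_filter, Finset.mem_univ, true_and, not_not] at hfn
      exact hw0 ⟨i, fn⟩ hfn
    have hexp : ((arity i - 1 : ℕ) : ℝ) + ((1:ℝ) - (arity i : ℝ) + 1/(g:ℝ)) = 1/(g:ℝ) := by
      rw [Nat.cast_sub (h1 i)]; push_cast; ring
    have hcard := aux_card_noninj
      (fun fn : Fin (arity i) → β × Fin n => ¬ Function.Injective fn) (fun _ h => h)
    calc ∑ fn : Fin (arity i) → β × Fin n, w ⟨i, fn⟩
        = ∑ fn ∈ Finset.univ.filter (fun fn : Fin (arity i) → β × Fin n =>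
            ¬ Function.Injective fn), w ⟨i, fn⟩ := hsplit
      _ ≤ ∑ _fn ∈ Finset.univ.filter (fun fn : Fin (arity i) → β × Fin n =>
            ¬ Function.Injective fn),
            ENNReal.ofReal ((n:ℝ) ^ ((1:ℝ) - (arity i : ℝ) + 1/(g:ℝ))) :=
          Finset.sum_le_sum (fun fn _ => hw1 ⟨i, fn⟩)
      _ = ((Finset.univ.filter (fun fn : Fin (arity i) → β × Fin n =>
            ¬ Function.Injective fn)).card : ℝ≥0∞)
            * ENNReal.ofReal ((n:ℝ) ^ ((1:ℝ) - (arity i : ℝ) + 1/(g:ℝ))) := by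
          rw [Finset.sum_const, nsmul_eq_mul]
      _ ≤ (((arity i)^2 * Fintype.card (β × Fin n) ^ (arity i - 1) : ℕ) : ℝ≥0∞)
            * ENNReal.ofReal ((n:ℝ) ^ ((1:ℝ) - (arity i : ℝ) + 1/(g:ℝ))) :=
          mul_le_mul_left (by exact_mod_cast hcard) _
      _ = (((arity i)^2 : ℕ) : ℝ≥0∞) * ((Fintype.card β : ℝ≥0∞)^(arity i - 1)
            * (((n:ℝ≥0∞))^(arity i - 1)
              * ENNReal.ofReal ((n:ℝ) ^ ((1:ℝ) - (arity i : ℝ) + 1/(g:ℝ))))) := by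
          rw [Fintype.card_prod, Fintype.card_fin]
          push_cast
          ring
      _ = (((arity i)^2 : ℕ) : ℝ≥0∞) * ((Fintype.card β : ℝ≥0∞)^(arity i - 1)
            * ENNReal.ofReal ((n:ℝ) ^ ((1:ℝ)/(g:ℝ)))) := by
          rw [aux_npow_mul_ofReal hn, hexp]
      _ ≤ (((arity i)^2 : ℕ) : ℝ≥0∞)
            * ((Fintype.card β : ℝ≥0∞)^(g * (Finset.univ.sup arity - 1)) * (n : ℝ≥0∞)) := by
          refine mul_le_mul_right (mul_le_mul' ?_ ?_) _
          · refine pow_le_pow_right₀ (by exact_mod_cast hB) ?_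
            have h2 : arity i - 1 ≤ Finset.univ.sup arity - 1 := by
              have := Finset.le_sup (f := arity) (Finset.mem_univ i)
              omega
            exact le_trans h2 (Nat.le_mul_of_pos_left _ (by omega))
          · calc ENNReal.ofReal ((n:ℝ) ^ ((1:ℝ)/(g:ℝ)))
                ≤ ENNReal.ofReal ((n:ℝ) ^ (1:ℝ)) := aux_ofReal_rpow_le hn hgr
              _ = (n : ℝ≥0∞) := aux_ofReal_rpow_one
      _ = (((arity i)^2 : ℕ) : ℝ≥0∞)
            * (Fintype.card β : ℝ≥0∞)^(g * (Finset.univ.sup arity - 1)) * (n : ℝ≥0∞) :=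
          (mul_assoc _ _ _).symm
  calc ∑ i : ι, ∑ fn : Fin (arity i) → β × Fin n, w ⟨i, fn⟩
      ≤ ∑ i : ι, (((arity i)^2 : ℕ) : ℝ≥0∞)
          * (Fintype.card β : ℝ≥0∞)^(g * (Finset.univ.sup arity - 1)) * (n : ℝ≥0∞) :=
        Finset.sum_le_sum (fun i _ => key i)
    _ = ((∑ i, (arity i)^2 : ℕ) : ℝ≥0∞)
          * (Fintype.card β : ℝ≥0∞)^(g * (Finset.univ.sup arity - 1)) * n := by
        rw [← Finset.sum_mul, ← Finset.sum_mul]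
        push_cast
        rfl
lemma aux_fin_ne_sub_one (s : ℕ) (m : Fin (s+2)) : m ≠ m - 1 := by
  intro h
  have h3 : m + 1 = m - 1 + 1 := congrArg (· + 1) h
  rw [sub_add_cancel] at h3
  have h4 : (1 : Fin (s+2)) = 0 := add_eq_left.mp h3
  simpa using congrArg Fin.val h4

lemma aux_cyc {ι : Type} [Fintype ι] (arity : ι → ℕ) (h1 : ∀ i, 1 ≤ arity i)
    {β : Type} [Fintype β] {n g : ℕ} (hn : 1 ≤ n) (hg : 1 ≤ g)
    (hB : 1 ≤ Fintype.card β) (s : ℕ) (hs : s + 2 ≤ g)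
    (F : (Σ i : ι, Fin (arity i) → β × Fin n) →
      Finset ((Fin (s+2) → β × Fin n) × (Fin (s+2) → Σ i : ι, Fin (arity i) → β × Fin n)))
    (hF : ∀ c cfg, cfg ∈ F c →
      Function.Injective cfg.1 ∧
      (∀ m : Fin (s+2), (∃ j, (cfg.2 m).2 j = cfg.1 m) ∧ (∃ j, (cfg.2 (m+1)).2 j = cfg.1 m)) ∧
      ∃ m, cfg.2 m = c) :
    ∑ c, ∑ cfg ∈ F c,
        ∏ m, ENNReal.ofReal ((n:ℝ) ^ ((1:ℝ) - (arity ((cfg.2 m).1) : ℝ) + 1/(g:ℝ)))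
    ≤ ((g * ((∑ i, (arity i)^2) + 1)^g : ℕ) : ℝ≥0∞)
      * (Fintype.card β : ℝ≥0∞)^(g * (Finset.univ.sup arity - 1)) * n := by
  classical
  set r := Finset.univ.sup arity with hr
  set D : ℕ := ∑ i, (arity i)^2 with hD
  set W : (Fin (s+2) → (Σ i : ι, Fin (arity i) → β × Fin n)) → ℝ≥0∞ :=
    fun rr => ∏ m, ENNReal.ofReal ((n:ℝ) ^ ((1:ℝ) - (arity ((rr m).1) : ℝ) + 1/(g:ℝ)))
    with hW
  set Q : ((Fin (s+2) → β × Fin n) × (Fin (s+2) → Σ i : ι, Fin (arity i) → β × Fin n)) → Prop :=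
    fun cfg => Function.Injective cfg.1 ∧
      (∀ m : Fin (s+2), (∃ j, (cfg.2 m).2 j = cfg.1 m) ∧ (∃ j, (cfg.2 (m+1)).2 j = cfg.1 m))
    with hQ
  set A1 : ℝ≥0∞ := if 2 ≤ r then
      ((D : ℕ) : ℝ≥0∞) * (Fintype.card β : ℝ≥0∞)^(r - 2)
        * ENNReal.ofReal ((n:ℝ) ^ (1/(g:ℝ) - 1)) else 0 with hA1
  have hgpos : (0:ℝ) < g := by exact_mod_cast Nat.lt_of_lt_of_le Nat.zero_lt_one hg
  -- Step C: per-configuration bound after swapping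
  have stepC : ∀ cfg, (∑ c, if cfg ∈ F c then W cfg.2 else 0)
      ≤ (if Q cfg then ((s+2 : ℕ) : ℝ≥0∞) * W cfg.2 else 0) := by
    intro cfg
    by_cases hq : Q cfg
    · rw [if_pos hq]
      calc (∑ c, if cfg ∈ F c then W cfg.2 else 0)
          ≤ ∑ c, if (∃ m, cfg.2 m = c) then W cfg.2 else 0 := by
            refine Finset.sum_le_sum (fun c _ => ?_)
            by_cases h : cfg ∈ F c
            · rw [if_pos h, if_pos (hF c cfg h).2.2]
            · rw [if_neg h]; exact zero_le
        _ = ∑ c ∈ Finset.univ.filter (fun c => ∃ m, cfg.2 m = c), W cfg.2 :=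
            (Finset.sum_filter _ _).symm
        _ = ((Finset.univ.filter (fun c => ∃ m, cfg.2 m = c)).card : ℝ≥0∞) * W cfg.2 := by
            rw [Finset.sum_const, nsmul_eq_mul]
        _ ≤ ((s+2 : ℕ) : ℝ≥0∞) * W cfg.2 := by
            refine mul_le_mul_left ?_ _
            refine Nat.cast_le.mpr ?_
            calc (Finset.univ.filter (fun c => ∃ m, cfg.2 m = c)).card
                ≤ (Finset.image cfg.2 Finset.univ).card := by
                  refine Finset.card_le_card ?_
                  intro c hc
                  obtain ⟨m, hm⟩ := (Finset.mem_filter.1 hc).2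
                  exact Finset.mem_image.2 ⟨m, Finset.mem_univ m, hm⟩
              _ ≤ (Finset.univ : Finset (Fin (s+2))).card := Finset.card_image_le.trans
                  (by rw [Finset.card_univ])
              _ = s + 2 := by simp
    · rw [if_neg hq]
      refine le_of_eq (Finset.sum_eq_zero (fun c _ => ?_))
      rw [if_neg]
      intro h
      exact hq ⟨(hF c cfg h).1, (hF c cfg h).2.1⟩
  -- Step F: per-x bound
  have stepF : ∀ x : Fin (s+2) → β × Fin n,
      (∑ rr : Fin (s+2) → (Σ i : ι, Fin (arity i) → β × Fin n),
        if Q (x, rr) then W rr else 0) ≤ A1 ^ (s+2) := by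
    intro x
    by_cases hx : Function.Injective x
    · calc (∑ rr : Fin (s+2) → (Σ i : ι, Fin (arity i) → β × Fin n),
            if Q (x, rr) then W rr else 0)
          = ∑ rr ∈ Finset.univ.filter (fun rr => Q (x, rr)), W rr :=
            (Finset.sum_filter _ _).symm
        _ ≤ ∑ rr ∈ Fintype.piFinset (fun m : Fin (s+2) =>
              Finset.univ.filter (fun t : (Σ i : ι, Fin (arity i) → β × Fin n) =>
                (∃ j, t.2 j = x m) ∧ (∃ j, t.2 j = x (m - 1)))), W rr := by
            refine Finset.sum_le_sum_of_subset ?_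
            intro rr hrr
            obtain ⟨-, hadj⟩ := Finset.mem_filter.1 hrr
            rw [Fintype.mem_piFinset]
            intro m
            rw [Finset.mem_filter]
            refine ⟨Finset.mem_univ _, (hadj.2 m).1, ?_⟩
            have := (hadj.2 (m - 1)).2
            rwa [sub_add_cancel] at this
        _ = ∏ m : Fin (s+2), ∑ t ∈ Finset.univ.filter
              (fun t : (Σ i : ι, Fin (arity i) → β × Fin n) =>
                (∃ j, t.2 j = x m) ∧ (∃ j, t.2 j = x (m - 1))),
              ENNReal.ofReal ((n:ℝ) ^ ((1:ℝ) - (arity t.1 : ℝ) + 1/(g:ℝ))) := by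
            simp only [hW]
            exact (Finset.prod_univ_sum
              (fun m : Fin (s+2) => Finset.univ.filter
                (fun t : (Σ i : ι, Fin (arity i) → β × Fin n) =>
                  (∃ j, t.2 j = x m) ∧ (∃ j, t.2 j = x (m - 1))))
              (fun _m t => ENNReal.ofReal
                ((n:ℝ) ^ ((1:ℝ) - (arity t.1 : ℝ) + 1/(g:ℝ))))).symm
        _ ≤ ∏ _m : Fin (s+2), A1 := by
            refine Finset.prod_le_prod' (fun m _ => ?_)
            have hab : x m ≠ x (m - 1) := fun h => aux_fin_ne_sub_one s m (hx h)
            rw [hA1, hD, hr]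
            exact aux_tuple_sum arity hn hB hab _ (fun t => Iff.rfl)
        _ = A1 ^ (s+2) := by rw [Finset.prod_const, Finset.card_univ, Fintype.card_fin]
    · refine le_of_eq_of_le (Finset.sum_eq_zero (fun rr _ => ?_)) (zero_le)
      rw [if_neg]
      intro hq
      exact hx hq.1
  -- Step H: the key product bound
  have stepH : ((Fintype.card (β × Fin n) : ℝ≥0∞)) * A1
      ≤ (((D + 1 : ℕ)) : ℝ≥0∞) * (Fintype.card β : ℝ≥0∞)^(r - 1)
        * ENNReal.ofReal ((n:ℝ) ^ ((1:ℝ)/(g:ℝ))) := by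
    rw [hA1]
    by_cases hr2 : 2 ≤ r
    · rw [if_pos hr2]
      have hcast : ((Fintype.card (β × Fin n) : ℝ≥0∞))
          = (Fintype.card β : ℝ≥0∞) * ((n : ℝ≥0∞)) := by
        rw [Fintype.card_prod, Fintype.card_fin]; push_cast; rfl
      rw [hcast]
      have hnz : ((n : ℝ≥0∞))^1 * ENNReal.ofReal ((n:ℝ) ^ (1/(g:ℝ) - 1))
          = ENNReal.ofReal ((n:ℝ) ^ ((1:ℝ)/(g:ℝ))) := by
        rw [aux_npow_mul_ofReal hn]
        norm_num
      have hbc : (Fintype.card β : ℝ≥0∞) * (Fintype.card β : ℝ≥0∞)^(r - 2)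
          = (Fintype.card β : ℝ≥0∞)^(r - 1) := by
        rw [← pow_succ']
        congr 1
        omega
      calc (Fintype.card β : ℝ≥0∞) * ((n : ℝ≥0∞))
            * (((D : ℕ) : ℝ≥0∞) * (Fintype.card β : ℝ≥0∞)^(r - 2)
              * ENNReal.ofReal ((n:ℝ) ^ (1/(g:ℝ) - 1)))
          = ((D : ℕ) : ℝ≥0∞)
            * ((Fintype.card β : ℝ≥0∞) * (Fintype.card β : ℝ≥0∞)^(r - 2))
            * (((n : ℝ≥0∞))^1 * ENNReal.ofReal ((n:ℝ) ^ (1/(g:ℝ) - 1))) := by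
            ring
        _ = ((D : ℕ) : ℝ≥0∞) * (Fintype.card β : ℝ≥0∞)^(r - 1)
            * ENNReal.ofReal ((n:ℝ) ^ ((1:ℝ)/(g:ℝ))) := by rw [hnz, hbc]
        _ ≤ (((D + 1 : ℕ)) : ℝ≥0∞) * (Fintype.card β : ℝ≥0∞)^(r - 1)
            * ENNReal.ofReal ((n:ℝ) ^ ((1:ℝ)/(g:ℝ))) := by
            refine mul_le_mul_left (mul_le_mul_left ?_ _) _
            exact_mod_cast Nat.le_succ D
    · rw [if_neg hr2, mul_zero]
      exact zero_le
  -- Now assemble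
  calc ∑ c, ∑ cfg ∈ F c, W cfg.2
      = ∑ c, ∑ cfg : ((Fin (s+2) → β × Fin n)
          × (Fin (s+2) → Σ i : ι, Fin (arity i) → β × Fin n)),
          if cfg ∈ F c then W cfg.2 else 0 := by
        refine Finset.sum_congr rfl (fun c _ => ?_)
        rw [Finset.sum_ite_mem, Finset.univ_inter]
    _ = ∑ cfg : ((Fin (s+2) → β × Fin n)
          × (Fin (s+2) → Σ i : ι, Fin (arity i) → β × Fin n)),
          ∑ c, if cfg ∈ F c then W cfg.2 else 0 := Finset.sum_comm
    _ ≤ ∑ cfg : ((Fin (s+2) → β × Fin n)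
          × (Fin (s+2) → Σ i : ι, Fin (arity i) → β × Fin n)),
          (if Q cfg then ((s+2 : ℕ) : ℝ≥0∞) * W cfg.2 else 0) :=
        Finset.sum_le_sum (fun cfg _ => stepC cfg)
    _ = ∑ x : Fin (s+2) → β × Fin n,
          ∑ rr : Fin (s+2) → (Σ i : ι, Fin (arity i) → β × Fin n),
          (if Q (x, rr) then ((s+2 : ℕ) : ℝ≥0∞) * W rr else 0) := Fintype.sum_prod_type _
    _ ≤ ∑ x : Fin (s+2) → β × Fin n, ((s+2 : ℕ) : ℝ≥0∞) * A1 ^ (s+2) := by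
        refine Finset.sum_le_sum (fun x _ => ?_)
        have : ∑ rr : Fin (s+2) → (Σ i : ι, Fin (arity i) → β × Fin n),
            (if Q (x, rr) then ((s+2 : ℕ) : ℝ≥0∞) * W rr else 0)
            = ((s+2 : ℕ) : ℝ≥0∞) * ∑ rr : Fin (s+2) → (Σ i : ι, Fin (arity i) → β × Fin n),
              (if Q (x, rr) then W rr else 0) := by
          rw [Finset.mul_sum]
          refine Finset.sum_congr rfl (fun rr _ => ?_)
          by_cases hq : Q (x, rr) <;> simp [hq]
        rw [this]
        exact mul_le_mul_right (stepF x) _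
    _ = ((Fintype.card (β × Fin n) : ℝ≥0∞))^(s+2) * (((s+2 : ℕ) : ℝ≥0∞) * A1 ^ (s+2)) := by
        rw [Finset.sum_const, Finset.card_univ, Fintype.card_fun, Fintype.card_fin]
        rw [nsmul_eq_mul]
        push_cast
        ring
    _ = ((s+2 : ℕ) : ℝ≥0∞) * ((Fintype.card (β × Fin n) : ℝ≥0∞) * A1) ^ (s+2) := by
        rw [mul_pow]
        ring
    _ ≤ ((g : ℕ) : ℝ≥0∞) * ((((D + 1 : ℕ)) : ℝ≥0∞) * (Fintype.card β : ℝ≥0∞)^(r - 1)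
          * ENNReal.ofReal ((n:ℝ) ^ ((1:ℝ)/(g:ℝ)))) ^ (s+2) := by
        refine mul_le_mul' (Nat.cast_le.mpr hs) ?_
        exact pow_le_pow_left₀ (zero_le) stepH _
    _ ≤ ((g : ℕ) : ℝ≥0∞) * ((((D + 1 : ℕ)) : ℝ≥0∞) ^ g
          * (Fintype.card β : ℝ≥0∞)^(g * (r - 1)) * (n : ℝ≥0∞)) := by
        refine mul_le_mul_right ?_ _
        rw [mul_pow, mul_pow]
        refine mul_le_mul' (mul_le_mul' ?_ ?_) ?_
        · exact pow_le_pow_right₀ (by exact_mod_cast Nat.succ_le_succ (Nat.zero_le D)) hs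
        · rw [← pow_mul]
          refine pow_le_pow_right₀ (by exact_mod_cast hB) ?_
          rw [mul_comm g (r-1)]
          exact Nat.mul_le_mul_left _ hs
        · rw [aux_ofReal_rpow_pow]
          calc ENNReal.ofReal ((n:ℝ) ^ ((1:ℝ)/(g:ℝ) * ((s+2 : ℕ) : ℝ)))
              ≤ ENNReal.ofReal ((n:ℝ) ^ (1:ℝ)) := by
                refine aux_ofReal_rpow_le hn ?_
                rw [div_mul_eq_mul_div, one_mul, div_le_one hgpos]
                exact_mod_cast hs
            _ = (n : ℝ≥0∞) := aux_ofReal_rpow_one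
    _ = ((g * ((∑ i, (arity i)^2) + 1)^g : ℕ) : ℝ≥0∞)
        * (Fintype.card β : ℝ≥0∞)^(g * (r - 1)) * n := by
        rw [hD]
        push_cast
        ring


lemma aux_main {ι : Type} [Fintype ι] (arity : ι → ℕ) (h1 : ∀ i, 1 ≤ arity i)
    (g : ℕ) (hg : 1 ≤ g) (β : Type) [Fintype β] (hB : 1 ≤ Fintype.card β)
    (RB : ∀ i, Set (Fin (arity i) → β)) (n : ℕ) (hn : 1 ≤ n) :
    ∫⁻ ω : (Σ i : ι, Fin (arity i) → β × Fin n) → Bool,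
        (Nat.card {c : Σ i : ι, Fin (arity i) → β × Fin n //
          InRandomRel RB ω c ∧ OnShortCycle RB g ω c} : ℝ≥0∞)
        ∂(Measure.pi fun c : Σ i : ι, Fin (arity i) → β × Fin n =>
            (PMF.bernoulli
              (min 1 (Real.toNNReal
                ((n : ℝ) ^ ((1 : ℝ) - (arity c.1 : ℝ) + 1 / (g : ℝ)))))
              (min_le_left _ _)).toMeasure)
    ≤ (((∑ i, (arity i)^2) + (g-1) * (g * ((∑ i, (arity i)^2) + 1)^g) : ℕ) : ℝ≥0∞)
      * (Fintype.card β : ℝ≥0∞)^(g * (Finset.univ.sup arity - 1)) * n := by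
  classical
  set ν := fun c : (Σ i : ι, Fin (arity i) → β × Fin n) =>
    (PMF.bernoulli
      (min 1 (Real.toNNReal ((n : ℝ) ^ ((1 : ℝ) - (arity c.1 : ℝ) + 1 / (g : ℝ)))))
      (min_le_left _ _)).toMeasure with hν
  haveI : ∀ c, IsProbabilityMeasure (ν c) := fun c => PMF.toMeasure.isProbabilityMeasure _
  rw [aux_expand ν (fun c ω => InRandomRel RB ω c ∧ OnShortCycle RB g ω c)]
  have hνtrue : ∀ c, ν c {true}
      = ((min 1 (Real.toNNReal ((n : ℝ) ^ ((1 : ℝ) - (arity c.1 : ℝ) + 1 / (g : ℝ)))) : NNReal) : ℝ≥0∞) := by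
    intro c
    rw [hν]
    rw [PMF.toMeasure_apply_singleton _ _ (measurableSet_singleton _)]
    simp [PMF.bernoulli_apply]
  have hq : ∀ c, ν c {true}
      ≤ ENNReal.ofReal ((n : ℝ) ^ ((1 : ℝ) - (arity c.1 : ℝ) + 1 / (g : ℝ))) :=
    fun c => (hνtrue c).le.trans (ENNReal.coe_le_coe.2 (min_le_right _ _))
  have perC : ∀ c : (Σ i : ι, Fin (arity i) → β × Fin n),
      Measure.pi ν {ω | InRandomRel RB ω c ∧ OnShortCycle RB g ω c}
      ≤ (if Function.Injective c.2 then 0 else ν c {true})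
        + ∑ s ∈ Finset.range (g-1),
            ∑ cfg ∈ Finset.univ.filter
              (fun cfg : ((Fin (s+2) → β × Fin n)
                  × (Fin (s+2) → Σ i : ι, Fin (arity i) → β × Fin n)) =>
                Function.Injective cfg.1 ∧ Function.Injective cfg.2 ∧
                (∀ m : Fin (s+2), (∃ j, (cfg.2 m).2 j = cfg.1 m)
                  ∧ (∃ j, (cfg.2 (m+1)).2 j = cfg.1 m)) ∧
                ∃ m, cfg.2 m = c),
              ∏ m, ENNReal.ofReal
                ((n:ℝ) ^ ((1:ℝ) - (arity ((cfg.2 m).1) : ℝ) + 1/(g:ℝ))) := by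
    intro c
    have hsub : {ω : (Σ i : ι, Fin (arity i) → β × Fin n) → Bool |
        InRandomRel RB ω c ∧ OnShortCycle RB g ω c}
        ⊆ (if Function.Injective c.2 then (∅ : Set _) else {ω | ω c = true})
          ∪ ⋃ s ∈ Finset.range (g-1), ⋃ cfg ∈ Finset.univ.filter
              (fun cfg : ((Fin (s+2) → β × Fin n)
                  × (Fin (s+2) → Σ i : ι, Fin (arity i) → β × Fin n)) =>
                Function.Injective cfg.1 ∧ Function.Injective cfg.2 ∧
                (∀ m : Fin (s+2), (∃ j, (cfg.2 m).2 j = cfg.1 m)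
                  ∧ (∃ j, (cfg.2 (m+1)).2 j = cfg.1 m)) ∧
                ∃ m, cfg.2 m = c),
              {ω | ∀ m, ω (cfg.2 m) = true} := by
      intro ω hω
      obtain ⟨hin, hcyc⟩ := hω
      rcases hcyc with ⟨-, hninj⟩ | ⟨s, hs, x, rr, hx, hrr, hall, hadj, m0, hm0⟩
      · left
        rw [if_neg hninj]
        exact hin.1
      · right
        refine Set.mem_iUnion₂.2 ⟨s, Finset.mem_range.2 (by omega), ?_⟩
        refine Set.mem_iUnion₂.2 ⟨(x, rr), ?_, ?_⟩
        · exact Finset.mem_filter.2 ⟨Finset.mem_univ _, hx, hrr, hadj, ⟨m0, hm0⟩⟩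
        · exact fun m => (hall m).1
    calc Measure.pi ν {ω | InRandomRel RB ω c ∧ OnShortCycle RB g ω c}
        ≤ Measure.pi ν ((if Function.Injective c.2 then (∅ : Set _) else {ω | ω c = true})
          ∪ _) := measure_mono hsub
      _ ≤ Measure.pi ν (if Function.Injective c.2 then (∅ : Set _) else {ω | ω c = true})
          + Measure.pi ν _ := measure_union_le _ _
      _ ≤ _ := by
        refine add_le_add ?_ ?_
        · by_cases h : Function.Injective c.2
          · rw [if_pos h, if_pos h, measure_empty]
          · rw [if_neg h, if_neg h]
            have hset : {ω : (Σ i : ι, Fin (arity i) → β × Fin n) → Bool | ω c = true}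
                = {ω | ∀ j : Fin 1, ω ((fun _ => c) j) = true} := by
              ext ω; simp
            rw [hset, aux_cyl ν (fun _ : Fin 1 => c)
              (Function.injective_of_subsingleton _)]
            simp
        · refine le_trans (measure_biUnion_finset_le _ _) ?_
          refine Finset.sum_le_sum (fun s _ => ?_)
          refine le_trans (measure_biUnion_finset_le _ _) ?_
          refine Finset.sum_le_sum (fun cfg hcfg => ?_)
          obtain ⟨-, -, hinj2, -, -⟩ := Finset.mem_filter.1 hcfg
          rw [aux_cyl ν cfg.2 hinj2]
          exact Finset.prod_le_prod' (fun m _ => hq (cfg.2 m))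
  calc ∑ c, Measure.pi ν {ω | InRandomRel RB ω c ∧ OnShortCycle RB g ω c}
      ≤ ∑ c, ((if Function.Injective c.2 then 0 else ν c {true})
        + ∑ s ∈ Finset.range (g-1),
            ∑ cfg ∈ Finset.univ.filter
              (fun cfg : ((Fin (s+2) → β × Fin n)
                  × (Fin (s+2) → Σ i : ι, Fin (arity i) → β × Fin n)) =>
                Function.Injective cfg.1 ∧ Function.Injective cfg.2 ∧
                (∀ m : Fin (s+2), (∃ j, (cfg.2 m).2 j = cfg.1 m)
                  ∧ (∃ j, (cfg.2 (m+1)).2 j = cfg.1 m)) ∧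
                ∃ m, cfg.2 m = c),
              ∏ m, ENNReal.ofReal
                ((n:ℝ) ^ ((1:ℝ) - (arity ((cfg.2 m).1) : ℝ) + 1/(g:ℝ)))) :=
        Finset.sum_le_sum (fun c _ => perC c)
    _ = (∑ c, (if Function.Injective c.2 then 0 else ν c {true}))
        + ∑ c, ∑ s ∈ Finset.range (g-1),
            ∑ cfg ∈ Finset.univ.filter
              (fun cfg : ((Fin (s+2) → β × Fin n)
                  × (Fin (s+2) → Σ i : ι, Fin (arity i) → β × Fin n)) =>
                Function.Injective cfg.1 ∧ Function.Injective cfg.2 ∧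
                (∀ m : Fin (s+2), (∃ j, (cfg.2 m).2 j = cfg.1 m)
                  ∧ (∃ j, (cfg.2 (m+1)).2 j = cfg.1 m)) ∧
                ∃ m, cfg.2 m = c),
              ∏ m, ENNReal.ofReal
                ((n:ℝ) ^ ((1:ℝ) - (arity ((cfg.2 m).1) : ℝ) + 1/(g:ℝ))) :=
        Finset.sum_add_distrib
    _ ≤ ((∑ i, (arity i)^2 : ℕ) : ℝ≥0∞)
          * (Fintype.card β : ℝ≥0∞)^(g * (Finset.univ.sup arity - 1)) * n
        + ∑ s ∈ Finset.range (g-1),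
            ((g * ((∑ i, (arity i)^2) + 1)^g : ℕ) : ℝ≥0∞)
            * (Fintype.card β : ℝ≥0∞)^(g * (Finset.univ.sup arity - 1)) * n := by
        refine add_le_add ?_ ?_
        · refine aux_deg arity h1 hn hg hB _ (fun c h => if_pos h) (fun c => ?_)
          by_cases h : Function.Injective c.2
          · rw [if_pos h]; exact zero_le
          · rw [if_neg h]; exact hq c
        · rw [Finset.sum_comm]
          refine Finset.sum_le_sum (fun s hs => ?_)
          refine aux_cyc arity h1 hn hg hB s (by
            have := Finset.mem_range.1 hs; omega) _ (fun c cfg hcfg => ?_)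
          obtain ⟨-, hx, -, hadj, hex⟩ := Finset.mem_filter.1 hcfg
          exact ⟨hx, hadj, hex⟩
    _ = (((∑ i, (arity i)^2) + (g-1) * (g * ((∑ i, (arity i)^2) + 1)^g) : ℕ) : ℝ≥0∞)
          * (Fintype.card β : ℝ≥0∞)^(g * (Finset.univ.sup arity - 1)) * n := by
        rw [Finset.sum_const, Finset.card_range, nsmul_eq_mul]
        push_cast
        ring

end Aux2

/-- Expected-count computation from the proof of Theorem 5.1 of Kun–Nešetřil: in the
random lift `B̲₀` on `B × [n]`, where each lift of a tuple of arity `k` is included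
independently with probability `p_k = n^{1-k+1/g}`, the expected number of relational
tuples lying on cycles of length at most `g` is `O(|B|^{g(r-1)}·n)`, with the implied
constant depending only on the signature and `g`. -/
theorem stmt15 {ι : Type} [Fintype ι] (arity : ι → ℕ) (h1 : ∀ i, 1 ≤ arity i)
    (g : ℕ) (hg : 1 ≤ g) :
    ∃ C : ℝ, 0 < C ∧ ∀ (β : Type) (_ : Fintype β)
      (RB : ∀ i, Set (Fin (arity i) → β)) (n : ℕ), 1 ≤ n →
      ∫⁻ ω : (Σ i : ι, Fin (arity i) → β × Fin n) → Bool,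
          (Nat.card {c : Σ i : ι, Fin (arity i) → β × Fin n //
            InRandomRel RB ω c ∧ OnShortCycle RB g ω c} : ℝ≥0∞)
          ∂(Measure.pi fun c : Σ i : ι, Fin (arity i) → β × Fin n =>
              (PMF.bernoulli
                (min 1 (Real.toNNReal
                  ((n : ℝ) ^ ((1 : ℝ) - (arity c.1 : ℝ) + 1 / (g : ℝ)))))
                (min_le_left _ _)).toMeasure)
        ≤ ENNReal.ofReal
            (C * (Fintype.card β : ℝ) ^ (g * (Finset.univ.sup arity - 1)) * n) := by
  classical
  refine ⟨(((∑ i, (arity i)^2) + (g-1) * (g * ((∑ i, (arity i)^2) + 1)^g) + 1 : ℕ) : ℝ),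
    by exact_mod_cast Nat.succ_pos _, ?_⟩
  intro β _inst RB n hn
  rcases Nat.eq_zero_or_pos (Fintype.card β) with hB | hB
  · haveI : IsEmpty β := Fintype.card_eq_zero_iff.mp hB
    haveI hKempty : IsEmpty (Σ i : ι, Fin (arity i) → β × Fin n) := by
      constructor
      rintro ⟨i, f⟩
      exact IsEmpty.false (f ⟨0, h1 i⟩).1
    have hzero : ∀ ω : (Σ i : ι, Fin (arity i) → β × Fin n) → Bool,
        (Nat.card {c : Σ i : ι, Fin (arity i) → β × Fin n //
          InRandomRel RB ω c ∧ OnShortCycle RB g ω c} : ℝ≥0∞) = 0 := by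
      intro ω
      haveI : IsEmpty {c : Σ i : ι, Fin (arity i) → β × Fin n //
          InRandomRel RB ω c ∧ OnShortCycle RB g ω c} := ⟨fun x => IsEmpty.false x.1⟩
      rw [Nat.card_of_isEmpty]
      simp
    simp only [hzero]
    rw [lintegral_zero]
    exact zero_le
  · refine le_trans (aux_main arity h1 g hg β hB RB n hn) ?_
    have hrw : ((((∑ i, (arity i)^2) + (g-1) * (g * ((∑ i, (arity i)^2) + 1)^g) + 1 : ℕ)) : ℝ)
        * (Fintype.card β : ℝ) ^ (g * (Finset.univ.sup arity - 1)) * (n:ℝ)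
        = (((((∑ i, (arity i)^2) + (g-1) * (g * ((∑ i, (arity i)^2) + 1)^g) + 1)
            * Fintype.card β ^ (g * (Finset.univ.sup arity - 1)) * n : ℕ)) : ℝ) := by
      push_cast
      ring
    rw [hrw, ENNReal.ofReal_natCast]
    have hlhs : (((∑ i, (arity i)^2) + (g-1) * (g * ((∑ i, (arity i)^2) + 1)^g) : ℕ) : ℝ≥0∞)
        * (Fintype.card β : ℝ≥0∞)^(g * (Finset.univ.sup arity - 1)) * (n : ℝ≥0∞)
        = (((((∑ i, (arity i)^2) + (g-1) * (g * ((∑ i, (arity i)^2) + 1)^g))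
            * Fintype.card β ^ (g * (Finset.univ.sup arity - 1)) * n : ℕ)) : ℝ≥0∞) := by
      push_cast
      ring
    rw [hlhs]
    refine Nat.cast_le.mpr ?_
    refine Nat.mul_le_mul_right _ (Nat.mul_le_mul_right _ ?_)
    omega
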